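/- (SSOL regret bound) Let (x_t, y_t), t = 1,…,T, with x_t ∈ R^d, y_t ∈ {−1,+1}, ‖x_t‖₂ ≤ X. Set A_0 = I, A_t = A_{t-1} + x_t x_t^⊤/r for r > 0, Φ_t(w) = (1/2) w^⊤ A_t w, λ_t = λ/t, θ_1 = 0, u_t = A_t^{-1} θ_t, w_t = soft-threshold of u_t at λ_t, hinge loss ℓ_t(w) = max(0, 1 − y_t w^⊤ x_t), θ_{t+1} = θ_t + η L_t y_t x_t with L_t the mistake indicator and additionally ‖x_t‖₁ ≤ X. Then for any w with w^⊤ A_T w ≤ D², the regret satisfies ∑_{t=1}^T ℓ_t(w_t) − ∑_{t=1}^T ℓ_t(w) ≤ D²/(2η) + (η/2)·r·d·log(1 + T X²/r) + λ X (log T + 1). -/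

import Mathlib

open Finset Matrix

namespace SSOL
variable {d : ℕ}




lemma qf_vecMulVec (x v : Fin d → ℝ) :
    v ⬝ᵥ (vecMulVec x x).mulVec v = (x ⬝ᵥ v) ^ 2 := by
  simp only [dotProduct, mulVec, vecMulVec, of_apply, Finset.mul_sum, Finset.sum_mul, sq]
  rw [Finset.sum_comm]
  apply Finset.sum_congr rfl; intro i _
  apply Finset.sum_congr rfl; intro j _
  ring

lemma psd_smul_vecMulVec {c : ℝ} (hc : 0 ≤ c) (x : Fin d → ℝ) :
    (c • vecMulVec x x).PosSemidef := by
  refine posSemidef_iff_dotProduct_mulVec.mpr ⟨?_, ?_⟩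
  · ext i j
    simp [vecMulVec, conjTranspose_apply, mul_comm]
  · intro v
    have hv : star v = v := by ext i; simp
    rw [hv, smul_mulVec, dotProduct_smul, qf_vecMulVec]
    positivity

/-- symmetric matrix quadratic swap -/
lemma dot_mulVec_symm {M : Matrix (Fin d) (Fin d) ℝ} (hM : M.IsHermitian)
    (a b : Fin d → ℝ) : a ⬝ᵥ M.mulVec b = b ⬝ᵥ M.mulVec a := by
  have hMt : Mᵀ = M := by
    have := hM; rwa [IsHermitian, conjTranspose_eq_transpose_of_trivial] at this
  rw [dotProduct_mulVec, ← mulVec_transpose, hMt, dotProduct_comm]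

lemma inv_mulVec_cancel {M : Matrix (Fin d) (Fin d) ℝ} (hM : M.PosDef)
    (θ : Fin d → ℝ) : M.mulVec (M⁻¹.mulVec θ) = θ := by
  rw [mulVec_mulVec, mul_nonsing_inv _ (isUnit_iff_ne_zero.2 hM.det_pos.ne'), one_mulVec]

lemma inv_hermitian {M : Matrix (Fin d) (Fin d) ℝ} (hM : M.PosDef) :
    M⁻¹.IsHermitian := hM.inv.1

/-- completing the square: `2⟨θ,w⟩ - wᵀMw ≤ θᵀM⁻¹θ` -/
lemma sq_bound {M : Matrix (Fin d) (Fin d) ℝ} (hM : M.PosDef) (θ w : Fin d → ℝ) :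
    2 * (θ ⬝ᵥ w) - w ⬝ᵥ M.mulVec w ≤ θ ⬝ᵥ M⁻¹.mulVec θ := by
  set m := M⁻¹.mulVec θ with hm
  have h0 : 0 ≤ (w - m) ⬝ᵥ M.mulVec (w - m) := hM.posSemidef.dotProduct_mulVec_nonneg _
  have hMm : M.mulVec m = θ := inv_mulVec_cancel hM θ
  have e1 : (w - m) ⬝ᵥ M.mulVec (w - m)
      = w ⬝ᵥ M.mulVec w - 2 * (θ ⬝ᵥ w) + θ ⬝ᵥ m := by
    rw [sub_dotProduct, mulVec_sub, dotProduct_sub, dotProduct_sub, hMm]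
    have h3 : m ⬝ᵥ M.mulVec w = θ ⬝ᵥ w := by
      rw [dot_mulVec_symm hM.1, hMm, dotProduct_comm]
    have h4 : m ⬝ᵥ θ = θ ⬝ᵥ m := dotProduct_comm _ _
    rw [dotProduct_comm w θ, h3, h4]; ring
  nlinarith [h0, e1]

lemma inv_qf_eq {M : Matrix (Fin d) (Fin d) ℝ} (hM : M.PosDef) (θ : Fin d → ℝ) :
    θ ⬝ᵥ M⁻¹.mulVec θ
      = 2 * (θ ⬝ᵥ M⁻¹.mulVec θ) - (M⁻¹.mulVec θ) ⬝ᵥ M.mulVec (M⁻¹.mulVec θ) := by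
  have h : (M⁻¹.mulVec θ) ⬝ᵥ M.mulVec (M⁻¹.mulVec θ) = θ ⬝ᵥ M⁻¹.mulVec θ := by
    rw [inv_mulVec_cancel hM, dotProduct_comm]
  rw [h]; ring

/-- antitonicity of inverse quadratic forms -/
lemma inv_qf_antitone {M N : Matrix (Fin d) (Fin d) ℝ} (hM : M.PosDef) (hN : N.PosDef)
    (h : ∀ v, v ⬝ᵥ M.mulVec v ≤ v ⬝ᵥ N.mulVec v) (θ : Fin d → ℝ) :
    θ ⬝ᵥ N⁻¹.mulVec θ ≤ θ ⬝ᵥ M⁻¹.mulVec θ := by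
  rw [inv_qf_eq hN θ]
  calc 2 * (θ ⬝ᵥ N⁻¹.mulVec θ) - (N⁻¹.mulVec θ) ⬝ᵥ N.mulVec (N⁻¹.mulVec θ)
      ≤ 2 * (θ ⬝ᵥ N⁻¹.mulVec θ) - (N⁻¹.mulVec θ) ⬝ᵥ M.mulVec (N⁻¹.mulVec θ) := by
        linarith [h (N⁻¹.mulVec θ)]
    _ ≤ θ ⬝ᵥ M⁻¹.mulVec θ := sq_bound hM θ _

/-- expansion of quadratic form of a sum, for hermitian N -/
lemma qf_add {N : Matrix (Fin d) (Fin d) ℝ} (hN : N.IsHermitian) (a b : Fin d → ℝ) :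
    (a + b) ⬝ᵥ N.mulVec (a + b)
      = a ⬝ᵥ N.mulVec a + 2 * (b ⬝ᵥ N.mulVec a) + b ⬝ᵥ N.mulVec b := by
  rw [add_dotProduct, mulVec_add, dotProduct_add, dotProduct_add]
  have : a ⬝ᵥ N.mulVec b = b ⬝ᵥ N.mulVec a := dot_mulVec_symm hN a b
  rw [this]; ring


lemma det_add_vecMulVec {M : Matrix (Fin d) (Fin d) ℝ} (hM : M.PosDef)
    (u v : Fin d → ℝ) :
    (M + vecMulVec u v).det = M.det * (1 + v ⬝ᵥ M⁻¹.mulVec u) := by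
  have hdet : IsUnit M.det := isUnit_iff_ne_zero.2 hM.det_pos.ne'
  have key : M + vecMulVec u v
      = M * (1 + replicateCol (Fin 1) (M⁻¹.mulVec u) * replicateRow (Fin 1) v) := by
    rw [Matrix.mul_add, Matrix.mul_one, replicateCol_mulVec, ← Matrix.mul_assoc, ← Matrix.mul_assoc,
      Matrix.mul_nonsing_inv _ hdet, Matrix.one_mul, vecMulVec_eq (Fin 1)]; rfl
  rw [key, det_mul]; congr 1; exact det_one_add_replicateCol_mul_replicateRow _ _

lemma smul_vecMulVec (c : ℝ) (x : Fin d → ℝ) :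
    vecMulVec (c • x) x = c • vecMulVec x x := by
  ext i j; simp [vecMulVec, mul_assoc]

/-- step bound: `xᵀ A_t⁻¹ x ≤ r (log det A_t - log det A_{t-1})` -/
lemma step_logdet {P Q : Matrix (Fin d) (Fin d) ℝ} (hP : P.PosDef) (hQ : Q.PosDef)
    {r : ℝ} (hr : 0 < r) (x : Fin d → ℝ)
    (hPQ : Q = P + r⁻¹ • vecMulVec x x) :
    x ⬝ᵥ Q⁻¹.mulVec x ≤ r * (Real.log Q.det - Real.log P.det) := by
  set q := x ⬝ᵥ Q⁻¹.mulVec x with hq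
  have hPdet := hP.det_pos
  have hQdet := hQ.det_pos
  have hPQ' : P = Q + vecMulVec ((-r⁻¹) • x) x := by
    rw [smul_vecMulVec, hPQ, add_assoc, ← add_smul]; simp
  have hdetP : P.det = Q.det * (1 - r⁻¹ * q) := by
    rw [hPQ', det_add_vecMulVec hQ]
    congr 1
    rw [mulVec_smul, dotProduct_smul]
    simp [hq]; ring
  have hpos : 0 < 1 - r⁻¹ * q := by
    by_contra h
    push_neg at h
    nlinarith
  have hlog : Real.log (1 - r⁻¹ * q) ≤ - (r⁻¹ * q) := by
    have := Real.log_le_sub_one_of_pos hpos; linarith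
  have hsplit : Real.log P.det = Real.log Q.det + Real.log (1 - r⁻¹ * q) := by
    rw [hdetP, Real.log_mul hQdet.ne' hpos.ne']
  have h1 : r⁻¹ * q ≤ Real.log Q.det - Real.log P.det := by linarith
  calc q = r * (r⁻¹ * q) := by field_simp
    _ ≤ r * (Real.log Q.det - Real.log P.det) := by
        exact mul_le_mul_of_nonneg_left h1 hr.le

lemma trace_eq_sum_eigenvalues {M : Matrix (Fin d) (Fin d) ℝ} (hM : M.IsHermitian) :
    M.trace = ∑ i, hM.eigenvalues i := by
  conv_lhs => rw [hM.spectral_theorem, Unitary.conjStarAlgAut_apply]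
  rw [trace_mul_cycle]
  have hU : (star (hM.eigenvectorUnitary : Matrix (Fin d) (Fin d) ℝ)) *
      (hM.eigenvectorUnitary : Matrix (Fin d) (Fin d) ℝ) = 1 :=
    hM.eigenvectorUnitary.2.1
  rw [hU, Matrix.one_mul, trace_diagonal]
  simp

lemma logdet_le_of_trace {M : Matrix (Fin d) (Fin d) ℝ} (hM : M.PosDef) {B : ℝ}
    (hB : 1 ≤ B) (htr : M.trace ≤ d * B) : Real.log M.det ≤ d * Real.log B := by
  rcases Nat.eq_zero_or_pos d with h0 | hd
  · subst h0
    simp [Matrix.det_isEmpty]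
  · have hEig := hM.eigenvalues_pos
    have hdet : M.det = ∏ i, hM.1.eigenvalues i := by
      simpa using hM.1.det_eq_prod_eigenvalues
    have hdpos : (0:ℝ) < d := by exact_mod_cast hd
    -- AM-GM
    have hgm := Real.geom_mean_le_arith_mean_weighted Finset.univ
      (fun _ : Fin d => 1 / d) (fun i => hM.1.eigenvalues i)
      (fun i _ => by positivity) (by simp; field_simp)
      (fun i _ => (hEig i).le)
    have hsum : ∑ i, (1 / (d:ℝ)) * hM.1.eigenvalues i = M.trace / d := by
      rw [trace_eq_sum_eigenvalues hM.1, Finset.sum_div]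
      apply Finset.sum_congr rfl; intro i _; ring
    have hprod : ∏ i, (hM.1.eigenvalues i) ^ (1 / (d:ℝ))
        = (∏ i, hM.1.eigenvalues i) ^ (1 / (d:ℝ)) := by
      rw [← Real.finset_prod_rpow _ _ (fun i _ => (hEig i).le)]
    have hP : (0:ℝ) < ∏ i, hM.1.eigenvalues i := Finset.prod_pos (fun i _ => hEig i)
    have hkey : (∏ i, hM.1.eigenvalues i) ^ (1 / (d:ℝ)) ≤ B := by
      rw [hprod, hsum] at hgm
      calc (∏ i, hM.1.eigenvalues i) ^ (1 / (d:ℝ)) ≤ M.trace / d := hgm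
        _ ≤ B := by rw [div_le_iff₀ hdpos]; linarith [htr]
    have hdet_le : M.det ≤ B ^ (d:ℕ) := by
      have h1 : ((∏ i, hM.1.eigenvalues i) ^ (1 / (d:ℝ))) ^ (d:ℕ)
          ≤ B ^ (d:ℕ) := by
        apply pow_le_pow_left₀ (Real.rpow_nonneg hP.le _) hkey
      rwa [← Real.rpow_natCast ((∏ i, hM.1.eigenvalues i) ^ (1 / (d:ℝ))) d,
        ← Real.rpow_mul hP.le, one_div, inv_mul_cancel₀ hdpos.ne', Real.rpow_one, ← hdet] at h1
    calc Real.log M.det ≤ Real.log (B ^ (d:ℕ)) :=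
          Real.log_le_log hM.det_pos hdet_le
      _ = d * Real.log B := by rw [Real.log_pow]

lemma harmonic_le : ∀ T : ℕ, 1 ≤ T → ∑ t ∈ Icc 1 T, (1:ℝ)/t ≤ Real.log T + 1 := by
  intro T
  induction T with
  | zero => intro h; omega
  | succ n ih =>
    intro _
    rcases Nat.eq_zero_or_pos n with h0 | hn
    · subst h0; simp
    · rw [Finset.sum_Icc_succ_top (by omega)]
      have hlog : (1:ℝ)/(n+1) ≤ Real.log (n+1) - Real.log n := by
        have hx : (0:ℝ) < (n:ℝ)/(n+1) := by positivity
        have := Real.log_le_sub_one_of_pos hx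
        rw [Real.log_div (by exact_mod_cast hn.ne') (by positivity)] at this
        have hn1 : (0:ℝ) < (n:ℝ)+1 := by positivity
        have : (n:ℝ)/(n+1) - 1 = -(1/(n+1)) := by field_simp; ring
        nlinarith [Real.log_le_sub_one_of_pos hx,
          Real.log_div (show ((n:ℝ)) ≠ 0 by exact_mod_cast hn.ne') (show ((n:ℝ)+1) ≠ 0 by positivity)]
      have := ih hn
      push_cast
      push_cast at hlog this
      linarith

lemma soft_thresh_close {a c : ℝ} (hc : 0 ≤ c) :
    |Real.sign a * max (|a| - c) 0 - a| ≤ c := by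
  rcases lt_trichotomy a 0 with h | h | h
  · rw [Real.sign_of_neg h, abs_of_neg h]
    rcases le_or_gt (-a) c with h2 | h2
    · rw [max_eq_right (by linarith)]
      rw [abs_le]; constructor <;> nlinarith
    · rw [max_eq_left (by linarith)]
      rw [abs_le]; constructor <;> nlinarith
  · subst h; simp [hc]
  · rw [Real.sign_of_pos h, abs_of_pos h]
    rcases le_or_gt a c with h2 | h2
    · rw [max_eq_right (by linarith)]
      rw [abs_le]; constructor <;> nlinarith
    · rw [max_eq_left (by linarith)]
      rw [abs_le]; constructor <;> nlinarith

end SSOL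

/-- Dot product on `ℝ^d`. -/
noncomputable def dot {d : ℕ} (u v : Fin d → ℝ) : ℝ := ∑ i, u i * v i

open SSOL

/-- SSOL regret bound:
regret ≤ `D²/(2η) + (η/2) r d log(1 + T X²/r) + λ X (log T + 1)`. -/
theorem ssol_regret {d : ℕ} (T : ℕ) (hT : 1 ≤ T) (X η lam r D : ℝ)
    (hη : 0 < η) (hlam : 0 ≤ lam) (hr : 0 < r)
    (x : ℕ → Fin d → ℝ) (y : ℕ → ℝ)
    (hy : ∀ t ∈ Finset.Icc 1 T, y t = 1 ∨ y t = -1)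
    (hX1 : ∀ t ∈ Finset.Icc 1 T, ∑ i, |x t i| ≤ X)
    (hX2 : ∀ t ∈ Finset.Icc 1 T, Real.sqrt (∑ i, (x t i) ^ 2) ≤ X)
    (A : ℕ → Matrix (Fin d) (Fin d) ℝ)
    (hA0 : A 0 = 1)
    (hA : ∀ t : ℕ, A (t + 1) = A t + r⁻¹ • Matrix.vecMulVec (x (t + 1)) (x (t + 1)))
    (θ u w : ℕ → Fin d → ℝ) (L : ℕ → ℝ)
    (loss : ℕ → (Fin d → ℝ) → ℝ)
    (hloss : ∀ t v, loss t v = max 0 (1 - y t * dot v (x t)))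
    (hθ1 : θ 1 = 0)
    (hu : ∀ t ∈ Finset.Icc 1 T, u t = (A t)⁻¹.mulVec (θ t))
    (hw : ∀ t ∈ Finset.Icc 1 T, ∀ i,
      w t i = Real.sign (u t i) * max (|u t i| - lam / t) 0)
    (hL : ∀ t, L t = if 0 < loss t (w t) then 1 else 0)
    (hθ : ∀ t ∈ Finset.Icc 1 T, θ (t + 1) = θ t + (η * L t * y t) • x t)
    (wv : Fin d → ℝ) (hwv : wv ⬝ᵥ (A T).mulVec wv ≤ D ^ 2) :
    ∑ t ∈ Finset.Icc 1 T, loss t (w t) - ∑ t ∈ Finset.Icc 1 T, loss t wv ≤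
      D ^ 2 / (2 * η) + η / 2 * r * d * Real.log (1 + T * X ^ 2 / r)
        + lam * X * (Real.log T + 1) := by
  -- basic facts
  have hX0 : 0 ≤ X := le_trans (Real.sqrt_nonneg _) (hX2 1 (by simp [hT]))
  have hpos : ∀ t, (A t).PosDef := by
    intro t
    induction t with
    | zero => rw [hA0]; exact Matrix.PosDef.one
    | succ n ih =>
      rw [hA n]
      exact ih.add_posSemidef (psd_smul_vecMulVec (by positivity) _)
  have hmono : ∀ t (v : Fin d → ℝ),
      v ⬝ᵥ (A t).mulVec v ≤ v ⬝ᵥ (A (t+1)).mulVec v := by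
    intro t v
    rw [hA t, add_mulVec, dotProduct_add]
    have h0 : 0 ≤ v ⬝ᵥ (r⁻¹ • Matrix.vecMulVec (x (t+1)) (x (t+1))).mulVec v :=
      (psd_smul_vecMulVec (by positivity) _).dotProduct_mulVec_nonneg v
    linarith
  set q : ℕ → ℝ := fun t => x t ⬝ᵥ (A t)⁻¹.mulVec (x t) with hq
  have hqnn : ∀ t, 0 ≤ q t := fun t => (hpos t).inv.posSemidef.dotProduct_mulVec_nonneg (x t)
  have hL01 : ∀ t, L t = 0 ∨ L t = 1 := by
    intro t; rw [hL t]; split <;> simp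
  have hLsq : ∀ t, L t ^ 2 = L t := by
    intro t; rcases hL01 t with h | h <;> rw [h] <;> ring
  have hysq : ∀ t ∈ Finset.Icc 1 T, y t ^ 2 = 1 := by
    intro t ht; rcases hy t ht with h | h <;> rw [h] <;> ring
  -- Claim A: telescoped conjugate bound (times 2)
  have claimA : ∀ t, t ≤ T →
      θ (t+1) ⬝ᵥ (A t)⁻¹.mulVec (θ (t+1)) ≤
        ∑ s ∈ Finset.Icc 1 t,
          (2 * (η * L s * y s) * (x s ⬝ᵥ u s) + η^2 * L s * q s) := by
    intro t
    induction t with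
    | zero => intro _; rw [hθ1]; simp
    | succ n ih =>
      intro hn1
      have hmem : n + 1 ∈ Finset.Icc 1 T := Finset.mem_Icc.2 ⟨by omega, hn1⟩
      have ihn := ih (by omega)
      have hstep : θ (n+1+1) = θ (n+1) + (η * L (n+1) * y (n+1)) • x (n+1) :=
        hθ (n+1) hmem
      have hherm : ((A (n+1))⁻¹).IsHermitian := inv_hermitian (hpos (n+1))
      set c : ℝ := η * L (n+1) * y (n+1) with hc
      have hexp : θ (n+1+1) ⬝ᵥ (A (n+1))⁻¹.mulVec (θ (n+1+1))
          = θ (n+1) ⬝ᵥ (A (n+1))⁻¹.mulVec (θ (n+1))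
            + 2 * ((c • x (n+1)) ⬝ᵥ (A (n+1))⁻¹.mulVec (θ (n+1)))
            + (c • x (n+1)) ⬝ᵥ (A (n+1))⁻¹.mulVec (c • x (n+1)) := by
        rw [hstep]; exact qf_add hherm _ _
      have hmid : (c • x (n+1)) ⬝ᵥ (A (n+1))⁻¹.mulVec (θ (n+1))
          = c * (x (n+1) ⬝ᵥ u (n+1)) := by
        rw [smul_dotProduct, hu (n+1) hmem, smul_eq_mul]
      have hlast : (c • x (n+1)) ⬝ᵥ (A (n+1))⁻¹.mulVec (c • x (n+1))
          = η^2 * L (n+1) * q (n+1) := by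
        rw [smul_dotProduct, mulVec_smul, dotProduct_smul, smul_eq_mul, smul_eq_mul]
        have h1 := hLsq (n+1); have h2 := hysq (n+1) hmem
        calc c * (c * q (n+1)) = η^2 * (L (n+1)^2) * (y (n+1)^2) * q (n+1) := by
              rw [hc]; ring
          _ = η^2 * L (n+1) * q (n+1) := by rw [h1, h2]; ring
      have hmono' : θ (n+1) ⬝ᵥ (A (n+1))⁻¹.mulVec (θ (n+1))
          ≤ θ (n+1) ⬝ᵥ (A n)⁻¹.mulVec (θ (n+1)) :=
        inv_qf_antitone (hpos n) (hpos (n+1)) (hmono n) _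
      rw [Finset.sum_Icc_succ_top (by omega : 1 ≤ n+1)]
      rw [hexp, hmid, hlast]
      simp only [hc]
      linarith
  -- Claim B
  have claimB : ∀ t, t ≤ T →
      θ (t+1) ⬝ᵥ wv = ∑ s ∈ Finset.Icc 1 t, η * L s * y s * (x s ⬝ᵥ wv) := by
    intro t
    induction t with
    | zero => intro _; rw [hθ1]; simp
    | succ n ih =>
      intro hn1
      have hmem : n + 1 ∈ Finset.Icc 1 T := Finset.mem_Icc.2 ⟨by omega, hn1⟩
      rw [Finset.sum_Icc_succ_top (by omega : 1 ≤ n+1), ← ih (by omega),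
        hθ (n+1) hmem, add_dotProduct, smul_dotProduct, smul_eq_mul]
  -- Combine via Fenchel
  have claimC : ∑ s ∈ Finset.Icc 1 T, (L s * y s * (x s ⬝ᵥ wv) - L s * y s * (x s ⬝ᵥ u s))
      ≤ D^2 / (2*η) + η/2 * ∑ s ∈ Finset.Icc 1 T, L s * q s := by
    set SW := ∑ s ∈ Finset.Icc 1 T, L s * y s * (x s ⬝ᵥ wv) with hSW
    set SU := ∑ s ∈ Finset.Icc 1 T, L s * y s * (x s ⬝ᵥ u s) with hSU
    set SQ := ∑ s ∈ Finset.Icc 1 T, L s * q s with hSQ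
    have hf := sq_bound (hpos T) (θ (T+1)) wv
    have hA1 := claimA T le_rfl
    have hB1 := claimB T le_rfl
    have hB2 : θ (T+1) ⬝ᵥ wv = η * SW := by
      rw [hB1, hSW, Finset.mul_sum]
      exact Finset.sum_congr rfl fun s _ => by ring
    have hA2 : ∑ s ∈ Finset.Icc 1 T,
        (2 * (η * L s * y s) * (x s ⬝ᵥ u s) + η^2 * L s * q s)
        = 2 * η * SU + η^2 * SQ := by
      rw [Finset.sum_add_distrib, hSU, hSQ, Finset.mul_sum, Finset.mul_sum]
      congr 1
      · exact Finset.sum_congr rfl fun s _ => by ring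
      · exact Finset.sum_congr rfl fun s _ => by ring
    rw [hA2] at hA1
    rw [hB2] at hf
    have hsum : ∑ s ∈ Finset.Icc 1 T,
        (L s * y s * (x s ⬝ᵥ wv) - L s * y s * (x s ⬝ᵥ u s)) = SW - SU := by
      rw [Finset.sum_sub_distrib]
    rw [hsum]
    have h2η : (0:ℝ) < 2 * η := by linarith
    have hc : D^2 / (2*η) * (2*η) = D^2 := by field_simp
    have key : (SW - SU) * (2*η) ≤ (D^2/(2*η) + η/2 * SQ) * (2*η) := by
      nlinarith [hf, hA1, hwv]
    exact le_of_mul_le_mul_right key h2η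
  -- per-round loss bound
  have claimD : ∀ t ∈ Finset.Icc 1 T, loss t (w t) - loss t wv ≤
      (L t * y t * (x t ⬝ᵥ wv) - L t * y t * (x t ⬝ᵥ u t)) + lam * X / t := by
    intro t ht
    obtain ⟨ht1, ht2⟩ := Finset.mem_Icc.1 ht
    have htpos : (0:ℝ) < t := by exact_mod_cast ht1
    have hcomm : ∀ v : Fin d → ℝ, x t ⬝ᵥ v = dot v (x t) := fun v =>
      dotProduct_comm _ _
    -- part 1: hinge subgradient
    have part1 : loss t (w t) - loss t wv ≤ L t * y t * ((x t ⬝ᵥ wv) - (x t ⬝ᵥ w t)) := by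
      by_cases hp : 0 < loss t (w t)
      · have hLt : L t = 1 := by rw [hL]; exact if_pos hp
        have ha : loss t (w t) = 1 - y t * dot (w t) (x t) := by
          rcases le_or_gt (1 - y t * dot (w t) (x t)) 0 with h | h
          · rw [hloss t (w t), max_eq_left h] at hp
            exact absurd hp (lt_irrefl 0)
          · rw [hloss t (w t)]; exact max_eq_right h.le
        have hb : 1 - y t * dot wv (x t) ≤ loss t wv := by
          rw [hloss]; exact le_max_right _ _
        rw [ha, hLt, hcomm wv, hcomm (w t)]
        linarith [hb]
      · have hLt : L t = 0 := by rw [hL]; exact if_neg hp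
        have h0 : loss t (w t) ≤ 0 := not_lt.1 hp
        have h1 : 0 ≤ loss t wv := by rw [hloss]; exact le_max_left _ _
        rw [hLt]
        simp only [zero_mul, mul_zero, sub_zero, zero_sub]
        linarith
    -- part 2: soft-threshold error
    have hct : 0 ≤ lam / t := by positivity
    have hclose : ∀ i, |u t i - w t i| ≤ lam / t := by
      intro i
      rw [abs_sub_comm, hw t ht i]
      exact soft_thresh_close hct
    have part2 : L t * y t * ((x t ⬝ᵥ u t) - (x t ⬝ᵥ w t)) ≤ lam * X / t := by
      have hd1 : (x t ⬝ᵥ u t) - (x t ⬝ᵥ w t) = x t ⬝ᵥ (u t - w t) := by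
        rw [dotProduct_sub]
      have habs : |x t ⬝ᵥ (u t - w t)| ≤ X * (lam / t) := by
        calc |x t ⬝ᵥ (u t - w t)| ≤ ∑ i, |x t i * (u t i - w t i)| :=
              Finset.abs_sum_le_sum_abs _ _
          _ ≤ ∑ i, |x t i| * (lam / t) := by
              apply Finset.sum_le_sum
              intro i _
              rw [abs_mul]
              exact mul_le_mul_of_nonneg_left (hclose i) (abs_nonneg _)
          _ = (∑ i, |x t i|) * (lam / t) := by rw [Finset.sum_mul]
          _ ≤ X * (lam / t) := mul_le_mul_of_nonneg_right (hX1 t ht) hct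
      have hLy : |L t * y t| ≤ 1 := by
        rcases hL01 t with h | h <;> rcases hy t ht with h' | h' <;>
          rw [h, h'] <;> norm_num
      calc L t * y t * ((x t ⬝ᵥ u t) - (x t ⬝ᵥ w t))
          ≤ |L t * y t * ((x t ⬝ᵥ u t) - (x t ⬝ᵥ w t))| := le_abs_self _
        _ = |L t * y t| * |x t ⬝ᵥ (u t - w t)| := by rw [hd1, abs_mul]
        _ ≤ 1 * (X * (lam / t)) := by
            apply mul_le_mul hLy habs (abs_nonneg _) zero_le_one
        _ = lam * X / t := by ring
    linarith [part1, part2]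
  -- harmonic sum bound
  have claimE : ∑ t ∈ Finset.Icc 1 T, lam * X / t ≤ lam * X * (Real.log T + 1) := by
    have h1 : ∑ t ∈ Finset.Icc 1 T, lam * X / t
        = lam * X * ∑ t ∈ Finset.Icc 1 T, (1:ℝ)/t := by
      rw [Finset.mul_sum]
      exact Finset.sum_congr rfl fun t _ => by ring
    rw [h1]
    exact mul_le_mul_of_nonneg_left (harmonic_le T hT) (by positivity)
  -- log-det bound
  have htel : ∀ t : ℕ, ∑ s ∈ Finset.Icc 1 t, q s
      ≤ r * (Real.log (A t).det - Real.log (A 0).det) := by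
    intro t
    induction t with
    | zero => simp
    | succ n ih =>
      rw [Finset.sum_Icc_succ_top (by omega : 1 ≤ n+1)]
      have hstep := step_logdet (hpos n) (hpos (n+1)) hr (x (n+1)) (hA n)
      have : q (n+1) ≤ r * (Real.log (A (n+1)).det - Real.log (A n).det) := hstep
      linarith [ih, this]
  have hdet0 : Real.log (A 0).det = 0 := by rw [hA0, det_one, Real.log_one]
  -- trace bound
  have hTX : (0:ℝ) ≤ T * X^2 / r := by positivity
  have hB : (1:ℝ) ≤ 1 + T * X^2 / r := by linarith
  have htrace : ∀ t, t ≤ T → (A t).trace ≤ d + t * X^2 / r := by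
    intro t
    induction t with
    | zero => intro _; rw [hA0]; simp [Matrix.trace_one]
    | succ n ih =>
      intro hn1
      have hmem : n + 1 ∈ Finset.Icc 1 T := Finset.mem_Icc.2 ⟨by omega, hn1⟩
      have ihn := ih (by omega)
      have hS : ∑ i, (x (n+1) i)^2 ≤ X^2 := by
        have h1 := hX2 (n+1) hmem
        have h2 : (0:ℝ) ≤ ∑ i, (x (n+1) i)^2 := by positivity
        nlinarith [Real.sq_sqrt h2, Real.sqrt_nonneg (∑ i, (x (n+1) i)^2)]
      have htr1 : (A (n+1)).trace = (A n).trace + r⁻¹ * ∑ i, (x (n+1) i)^2 := by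
        rw [hA n, Matrix.trace_add, Matrix.trace_smul, smul_eq_mul]
        congr 1
        rw [Matrix.trace]
        simp only [Matrix.diag_apply, vecMulVec_apply]
        congr 1
        exact Finset.sum_congr rfl fun i _ => (sq (x (n+1) i)).symm
      rw [htr1]
      have hcast : ((n+1:ℕ):ℝ) * X^2 / r = (n:ℝ) * X^2 / r + X^2 / r := by
        push_cast; ring
      rw [hcast]
      have : r⁻¹ * ∑ i, (x (n+1) i)^2 ≤ X^2 / r := by
        rw [div_eq_inv_mul]
        exact mul_le_mul_of_nonneg_left hS (by positivity)
      linarith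
  have htrT : (A T).trace ≤ (d:ℝ) * (1 + T * X^2 / r) := by
    rcases Nat.eq_zero_or_pos d with h0 | hd1
    · have : (A T).trace = ∑ i, (A T).diag i := rfl
      subst h0
      rw [this]
      simp
    · have h1 := htrace T le_rfl
      have hd1' : (1:ℝ) ≤ d := by exact_mod_cast hd1
      have hkey : 0 ≤ ((d:ℝ) - 1) * (T * X^2 / r) := mul_nonneg (by linarith) hTX
      have hexp : (d:ℝ) * (1 + T * X^2 / r) = d + (d:ℝ) * (T * X^2 / r) := by ring
      rw [hexp]
      have h2 : (T:ℝ) * X^2 / r ≤ (d:ℝ) * (T * X^2 / r) := by nlinarith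
      linarith
  have hlogdet : Real.log (A T).det ≤ d * Real.log (1 + T * X^2 / r) :=
    logdet_le_of_trace (hpos T) hB htrT
  have claimF : ∑ s ∈ Finset.Icc 1 T, L s * q s ≤ r * (d * Real.log (1 + T * X^2 / r)) := by
    have h1 : ∑ s ∈ Finset.Icc 1 T, L s * q s ≤ ∑ s ∈ Finset.Icc 1 T, q s := by
      apply Finset.sum_le_sum
      intro s _
      rcases hL01 s with h | h <;> rw [h]
      · simpa using hqnn s
      · simp
    have h2 := htel T
    rw [hdet0] at h2
    have h3 : r * Real.log (A T).det ≤ r * (d * Real.log (1 + T * X^2 / r)) :=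
      mul_le_mul_of_nonneg_left hlogdet hr.le
    linarith
  -- final assembly
  rw [← Finset.sum_sub_distrib]
  calc ∑ t ∈ Finset.Icc 1 T, (loss t (w t) - loss t wv)
      ≤ ∑ t ∈ Finset.Icc 1 T,
          ((L t * y t * (x t ⬝ᵥ wv) - L t * y t * (x t ⬝ᵥ u t)) + lam * X / t) :=
        Finset.sum_le_sum claimD
    _ = ∑ t ∈ Finset.Icc 1 T, (L t * y t * (x t ⬝ᵥ wv) - L t * y t * (x t ⬝ᵥ u t))
        + ∑ t ∈ Finset.Icc 1 T, lam * X / t := Finset.sum_add_distrib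
    _ ≤ (D^2 / (2*η) + η/2 * ∑ s ∈ Finset.Icc 1 T, L s * q s)
        + lam * X * (Real.log T + 1) := add_le_add claimC claimE
    _ ≤ (D^2 / (2*η) + η/2 * (r * (d * Real.log (1 + T * X^2 / r))))
        + lam * X * (Real.log T + 1) := by
        have := mul_le_mul_of_nonneg_left claimF (by positivity : (0:ℝ) ≤ η/2)
        linarith
    _ = D ^ 2 / (2 * η) + η / 2 * r * d * Real.log (1 + T * X ^ 2 / r)
        + lam * X * (Real.log T + 1) := by ring
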